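/- For fixed λ > 1, as z → +∞: Q(z, λz) ~ (1/(λ-1)) · (1/√(2πz)) · e^{-z(λ - 1 - log λ)}, where Q(z,x) = Γ(z,x)/Γ(z). -/

import Mathlib

set_option maxHeartbeats 1000000

open Filter Real MeasureTheory Set Topology Nat

/-- Upper incomplete gamma function. -/
noncomputable def upperGamma (z x : ℝ) : ℝ :=
  ∫ t in Set.Ioi x, t ^ (z - 1) * Real.exp (-t)

/-- Regularized upper incomplete gamma function. -/
noncomputable def regGammaQ (z x : ℝ) : ℝ := upperGamma z x / Real.Gamma z

noncomputable def SL (z : ℝ) : ℝ := (z - 1/2) * Real.log z - z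
noncomputable def LG (z : ℝ) : ℝ := Real.log (Real.Gamma z) - SL z
noncomputable def cSt : ℝ := Real.log (Real.sqrt (2 * Real.pi))

lemma fact_tendsto :
    Tendsto (fun n : ℕ => Real.log (n !) - (((n : ℝ) + 1/2) * Real.log n - n)) atTop (𝓝 cSt) := by
  have h1 : Tendsto (fun n : ℕ => Real.log (Stirling.stirlingSeq n)) atTop (𝓝 (Real.log (Real.sqrt π))) :=
    Stirling.tendsto_stirlingSeq_sqrt_pi.log (by positivity)
  have h2 : ∀ᶠ n : ℕ in atTop, Real.log (Stirling.stirlingSeq n) + (1/2) * Real.log 2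
      = Real.log (n !) - (((n : ℝ) + 1/2) * Real.log n - n) := by
    filter_upwards [eventually_ge_atTop 1] with n hn
    have hn0 : (0:ℝ) < n := by exact_mod_cast hn
    have hfac : (0:ℝ) < (n ! : ℝ) := by exact_mod_cast n.factorial_pos
    rw [Stirling.stirlingSeq]
    rw [Real.log_div hfac.ne' (by positivity), Real.log_mul (by positivity) (by positivity),
      Real.log_sqrt (by positivity), Real.log_mul (by norm_num) hn0.ne',
      Real.log_pow, Real.log_div hn0.ne' (Real.exp_pos 1).ne', Real.log_exp]
    ring
  have h3 : Tendsto (fun n : ℕ => Real.log (Stirling.stirlingSeq n) + (1/2) * Real.log 2) atTop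
      (𝓝 (Real.log (Real.sqrt π) + (1/2) * Real.log 2)) := h1.add tendsto_const_nhds
  have h4 : Real.log (Real.sqrt π) + (1/2) * Real.log 2 = cSt := by
    rw [cSt, Real.log_sqrt Real.pi_pos.le, Real.log_sqrt (by positivity),
      Real.log_mul (by norm_num) Real.pi_pos.ne']
    ring
  rw [h4] at h3
  exact h3.congr' h2

lemma mul_log_tendsto :
    Tendsto (fun n : ℕ => ((n:ℝ) + 1/2) * (Real.log ((n:ℝ)+1) - Real.log n)) atTop (𝓝 1) := by
  have hA : Tendsto (fun n : ℕ => (n:ℝ) * Real.log (1 + 1/(n:ℝ))) atTop (𝓝 1) := by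
    have := (Real.tendsto_mul_log_one_add_div_atTop 1).comp (tendsto_natCast_atTop_atTop (R := ℝ))
    simpa [Function.comp_def] using this
  have hB : Tendsto (fun n : ℕ => Real.log (1 + 1/(n:ℝ))) atTop (𝓝 0) := by
    have h1 : Tendsto (fun n : ℕ => 1 + 1/(n:ℝ)) atTop (𝓝 1) := by
      simpa using (tendsto_const_nhds (x := (1:ℝ))).add (tendsto_one_div_atTop_nhds_zero_nat)
    have := h1.log one_ne_zero
    simpa using this
  have key : ∀ᶠ n : ℕ in atTop,
      (n:ℝ) * Real.log (1 + 1/(n:ℝ)) + (1/2) * Real.log (1 + 1/(n:ℝ))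
        = ((n:ℝ) + 1/2) * (Real.log ((n:ℝ)+1) - Real.log n) := by
    filter_upwards [eventually_ge_atTop 1] with n hn
    have hn0 : (0:ℝ) < n := by exact_mod_cast hn
    have h1 : Real.log (1 + 1/(n:ℝ)) = Real.log ((n:ℝ)+1) - Real.log n := by
      rw [show (1:ℝ) + 1/(n:ℝ) = ((n:ℝ)+1)/n by field_simp, Real.log_div (by positivity) hn0.ne']
    rw [h1]; ring
  have h3 : Tendsto (fun n : ℕ => (n:ℝ) * Real.log (1 + 1/(n:ℝ)) + (1/2) * Real.log (1 + 1/(n:ℝ)))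
      atTop (𝓝 1) := by
    have := hA.add ((tendsto_const_nhds (x := (1/2:ℝ))).mul hB)
    simpa using this
  exact h3.congr' key

lemma b_tendsto : Tendsto (fun n : ℕ => LG n) atTop (𝓝 cSt) := by
  rw [← tendsto_add_atTop_iff_nat 1]
  have key : ∀ᶠ n : ℕ in atTop,
      (Real.log (n !) - (((n:ℝ) + 1/2) * Real.log n - n))
        - (((n:ℝ) + 1/2) * (Real.log ((n:ℝ)+1) - Real.log n) - 1) = LG (↑(n+1)) := by
    filter_upwards [eventually_ge_atTop 1] with n hn
    have hc : ((n+1 : ℕ) : ℝ) = (n:ℝ) + 1 := by push_cast; ring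
    have hΓ : Real.Gamma ((n:ℝ)+1) = (n ! : ℝ) := Real.Gamma_nat_eq_factorial n
    rw [LG, SL, hc, hΓ]
    ring
  have h3 : Tendsto (fun n : ℕ =>
      (Real.log (n !) - (((n:ℝ) + 1/2) * Real.log n - n))
        - (((n:ℝ) + 1/2) * (Real.log ((n:ℝ)+1) - Real.log n) - 1)) atTop (𝓝 cSt) := by
    have := fact_tendsto.sub (mul_log_tendsto.sub (tendsto_const_nhds (x := (1:ℝ))))
    simpa using this
  exact h3.congr' key

lemma LG_le (z : ℝ) (hz : 2 ≤ z) : LG z ≤ LG (⌊z⌋₊ : ℕ) + 1 / (2*z) := by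
  set n := ⌊z⌋₊ with hn
  have hn2 : 2 ≤ n := Nat.le_floor (by exact_mod_cast hz)
  have hn0 : (0:ℝ) < (n:ℝ) := by exact_mod_cast Nat.lt_of_lt_of_le Nat.zero_lt_two hn2
  have hnz : (n:ℝ) ≤ z := Nat.floor_le (by linarith)
  have hzn : z < (n:ℝ) + 1 := Nat.lt_floor_add_one z
  have hz0 : (0:ℝ) < z := by linarith
  -- convexity upper bound
  have hΓn1 : Real.log (Real.Gamma ((n:ℝ)+1)) = Real.log (n:ℝ) + Real.log (Real.Gamma (n:ℝ)) := by
    rw [Real.Gamma_add_one hn0.ne', Real.log_mul hn0.ne' (Real.Gamma_pos_of_pos hn0).ne']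
  have hup : Real.log (Real.Gamma z) ≤ Real.log (Real.Gamma (n:ℝ)) + (z - n) * Real.log (n:ℝ) := by
    have hmem1 : (n:ℝ) ∈ Ioi (0:ℝ) := hn0
    have hmem2 : (n:ℝ) + 1 ∈ Ioi (0:ℝ) := by simp; linarith
    have hcomb := Real.convexOn_log_Gamma.2 hmem1 hmem2
      (show (0:ℝ) ≤ (n:ℝ) + 1 - z by linarith) (show (0:ℝ) ≤ z - (n:ℝ) by linarith)
      (show ((n:ℝ) + 1 - z) + (z - (n:ℝ)) = 1 by ring)
    simp only [smul_eq_mul, Function.comp_apply] at hcomb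
    have harg : ((n:ℝ) + 1 - z) * (n:ℝ) + (z - (n:ℝ)) * ((n:ℝ)+1) = z := by ring
    rw [harg] at hcomb
    calc Real.log (Real.Gamma z)
        ≤ ((n:ℝ) + 1 - z) * Real.log (Real.Gamma (n:ℝ))
            + (z - (n:ℝ)) * Real.log (Real.Gamma ((n:ℝ)+1)) := hcomb
      _ = Real.log (Real.Gamma (n:ℝ)) + (z - n) * Real.log (n:ℝ) := by rw [hΓn1]; ring
  have hkey2 : (z - 1/2) * (Real.log (n:ℝ) - Real.log z) + (z - (n:ℝ)) ≤ 1/(2*z) := by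
    have h := Real.log_le_sub_one_of_pos (show (0:ℝ) < (n:ℝ)/z by positivity)
    rw [Real.log_div hn0.ne' hz0.ne'] at h
    have h2 : (z - 1/2) * (Real.log (n:ℝ) - Real.log z) ≤ (z - 1/2) * ((n:ℝ)/z - 1) :=
      mul_le_mul_of_nonneg_left h (by linarith)
    have h3 : (z - 1/2) * ((n:ℝ)/z - 1) + (z - (n:ℝ)) = (z - (n:ℝ)) / (2*z) := by
      field_simp; ring
    have h4 : (z - (n:ℝ)) / (2*z) ≤ 1/(2*z) := by
      gcongr
      linarith
    linarith
  rw [LG, LG, SL, SL]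
  linarith [hup, hkey2]

lemma LG_ge (z : ℝ) (hz : 2 ≤ z) :
    LG (⌊z⌋₊ : ℕ) - (Real.log ((⌊z⌋₊:ℝ) + 1) - Real.log ((⌊z⌋₊:ℝ) - 1)) ≤ LG z := by
  set n := ⌊z⌋₊ with hn
  have hn2 : 2 ≤ n := Nat.le_floor (by exact_mod_cast hz)
  have hn2' : (2:ℝ) ≤ (n:ℝ) := by exact_mod_cast hn2
  have hn0 : (0:ℝ) < (n:ℝ) := by linarith
  have hn1 : (0:ℝ) < (n:ℝ) - 1 := by linarith
  have hnz : (n:ℝ) ≤ z := Nat.floor_le (by linarith)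
  have hzn : z < (n:ℝ) + 1 := Nat.lt_floor_add_one z
  have hz0 : (0:ℝ) < z := by linarith
  -- Gamma recurrence at n : Gamma n = (n-1) Gamma (n-1)
  have hΓn : Real.log (Real.Gamma (n:ℝ)) =
      Real.log ((n:ℝ) - 1) + Real.log (Real.Gamma ((n:ℝ) - 1)) := by
    have h := Real.Gamma_add_one (s := (n:ℝ) - 1) hn1.ne'
    rw [show (n:ℝ) - 1 + 1 = (n:ℝ) by ring] at h
    rw [h, Real.log_mul hn1.ne' (Real.Gamma_pos_of_pos hn1).ne']
  -- convexity lower bound via slopes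
  have hlow : Real.log (Real.Gamma (n:ℝ)) + (z - n) * Real.log ((n:ℝ) - 1)
      ≤ Real.log (Real.Gamma z) := by
    rcases eq_or_lt_of_le hnz with heq | hlt
    · rw [← heq]; simp
    · have hs := Real.convexOn_log_Gamma.slope_mono_adjacent
        (show (n:ℝ) - 1 ∈ Ioi (0:ℝ) from hn1) (show z ∈ Ioi (0:ℝ) from hz0)
        (show (n:ℝ) - 1 < (n:ℝ) by linarith) hlt
      simp only [Function.comp_apply] at hs
      rw [show (n:ℝ) - ((n:ℝ) - 1) = 1 by ring, div_one, hΓn] at hs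
      have hs' : Real.log ((n:ℝ) - 1) ≤
          (Real.log (Real.Gamma z) - (Real.log ((n:ℝ)-1) + Real.log (Real.Gamma ((n:ℝ)-1))))
            / (z - (n:ℝ)) := by linarith
      have := (le_div_iff₀ (by linarith : (0:ℝ) < z - (n:ℝ))).mp hs'
      nlinarith [this, hΓn]
  -- key inequality 3 : (n-1/2)(log z - log n) ≤ z - n
  have hkey3 : ((n:ℝ) - 1/2) * (Real.log z - Real.log (n:ℝ)) ≤ z - (n:ℝ) := by
    have h := Real.log_le_sub_one_of_pos (show (0:ℝ) < z/(n:ℝ) by positivity)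
    rw [Real.log_div hz0.ne' hn0.ne'] at h
    have h2 : ((n:ℝ) - 1/2) * (Real.log z - Real.log (n:ℝ)) ≤ ((n:ℝ) - 1/2) * (z/(n:ℝ) - 1) :=
      mul_le_mul_of_nonneg_left h (by linarith)
    have h3 : (z - (n:ℝ)) - ((n:ℝ) - 1/2) * (z/(n:ℝ) - 1) = (z - (n:ℝ)) / (2*(n:ℝ)) := by
      field_simp; ring
    have h4 : (0:ℝ) ≤ (z - (n:ℝ)) / (2*(n:ℝ)) := div_nonneg (by linarith) (by positivity)
    linarith
  -- key inequality 4
  have hkey4 : Real.log ((n:ℝ) - 1) - Real.log ((n:ℝ) + 1)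
      ≤ (z - (n:ℝ)) * (Real.log ((n:ℝ) - 1) - Real.log z) := by
    have hx : Real.log z ≤ Real.log ((n:ℝ) + 1) := Real.log_le_log hz0 (by linarith)
    have hy : Real.log ((n:ℝ) - 1) ≤ Real.log ((n:ℝ) + 1) :=
      Real.log_le_log hn1 (by linarith)
    nlinarith [mul_nonneg (show (0:ℝ) ≤ z - (n:ℝ) by linarith)
        (sub_nonneg.2 hx),
      mul_nonneg (show (0:ℝ) ≤ 1 - (z - (n:ℝ)) by linarith) (sub_nonneg.2 hy)]
  rw [LG, LG, SL, SL]
  linarith [hlow, hkey3, hkey4]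

lemma LG_tendsto : Tendsto LG atTop (𝓝 cSt) := by
  have hfloor : Tendsto (fun z : ℝ => ⌊z⌋₊) atTop atTop := tendsto_nat_floor_atTop
  have hb : Tendsto (fun z : ℝ => LG (⌊z⌋₊ : ℕ)) atTop (𝓝 cSt) := b_tendsto.comp hfloor
  have he : Tendsto (fun n : ℕ => Real.log ((n:ℝ) + 1) - Real.log ((n:ℝ) - 1)) atTop (𝓝 0) := by
    have h1 : Tendsto (fun n : ℕ => ((n:ℝ) + 1) / ((n:ℝ) - 1)) atTop (𝓝 1) := by
      have hden : Tendsto (fun n : ℕ => (n:ℝ) - 1) atTop atTop := by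
        simp only [sub_eq_add_neg]
        exact tendsto_atTop_add_const_right atTop (-1 : ℝ) tendsto_natCast_atTop_atTop
      have h2 : Tendsto (fun n : ℕ => 1 + 2/((n:ℝ) - 1)) atTop (𝓝 1) := by
        have := Filter.Tendsto.div_atTop (tendsto_const_nhds (x := (2:ℝ))) hden
        simpa using (tendsto_const_nhds (x := (1:ℝ))).add this
      apply h2.congr'
      filter_upwards [eventually_ge_atTop 2] with n hn
      have hn1 : (0:ℝ) < (n:ℝ) - 1 := by
        have : (2:ℝ) ≤ (n:ℝ) := by exact_mod_cast hn
        linarith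
      field_simp
      ring
    have h2 := h1.log one_ne_zero
    rw [Real.log_one] at h2
    apply h2.congr'
    filter_upwards [eventually_ge_atTop 2] with n hn
    have hn1 : (0:ℝ) < (n:ℝ) - 1 := by
      have : (2:ℝ) ≤ (n:ℝ) := by exact_mod_cast hn
      linarith
    rw [Real.log_div (by linarith) hn1.ne']
  have hlo : Tendsto (fun z : ℝ => LG (⌊z⌋₊ : ℕ)
      - (Real.log ((⌊z⌋₊:ℝ) + 1) - Real.log ((⌊z⌋₊:ℝ) - 1))) atTop (𝓝 cSt) := by
    have := hb.sub (he.comp hfloor)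
    simpa using this
  have hhi : Tendsto (fun z : ℝ => LG (⌊z⌋₊ : ℕ) + 1/(2*z)) atTop (𝓝 cSt) := by
    have h0 : Tendsto (fun z : ℝ => 1/(2*z)) atTop (𝓝 0) :=
      Filter.Tendsto.div_atTop (tendsto_const_nhds (x := (1:ℝ)))
        (Filter.Tendsto.const_mul_atTop two_pos tendsto_id)
    simpa using hb.add h0
  exact tendsto_of_tendsto_of_tendsto_of_le_of_le' hlo hhi
    (by filter_upwards [eventually_ge_atTop 2] with z hz using LG_ge z hz)
    (by filter_upwards [eventually_ge_atTop 2] with z hz using LG_le z hz)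

lemma stirling_ratio : Tendsto (fun z : ℝ =>
    Real.Gamma z * Real.sqrt z * Real.exp z / (z ^ z * Real.sqrt (2*π))) atTop (𝓝 1) := by
  have h : Tendsto (fun z => Real.exp (LG z - cSt)) atTop (𝓝 (Real.exp (cSt - cSt))) :=
    (Real.continuous_exp.tendsto _).comp (LG_tendsto.sub tendsto_const_nhds)
  rw [sub_self, Real.exp_zero] at h
  apply h.congr'
  filter_upwards [eventually_ge_atTop 2] with z hz2
  have hz0 : (0:ℝ) < z := by linarith
  have hΓ : 0 < Real.Gamma z := Real.Gamma_pos_of_pos hz0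
  have e1 : z ^ z = Real.exp (Real.log z * z) := by rw [Real.rpow_def_of_pos hz0]
  have e2 : Real.sqrt z = Real.exp (Real.log z * (1/2)) := by
    rw [Real.sqrt_eq_rpow, Real.rpow_def_of_pos hz0]
  have e3 : Real.sqrt (2*π) = Real.exp cSt := (Real.exp_log (by positivity)).symm
  rw [e1, e2, e3]
  rw [← Real.exp_log hΓ]
  rw [← Real.exp_add, ← Real.exp_add, ← Real.exp_add, ← Real.exp_sub]
  congr 1
  rw [LG, SL]
  ring

lemma integral_Ioi_add (f : ℝ → ℝ) (a c : ℝ) :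
    ∫ x in Ioi (a + c), f x = ∫ x in Ioi a, f (x + c) := by
  rw [← integral_indicator measurableSet_Ioi, ← integral_indicator measurableSet_Ioi,
    ← integral_add_right_eq_self (fun x => (Ioi (a+c)).indicator f x) c]
  congr 1
  ext x
  have hmem : x + c ∈ Ioi (a + c) ↔ x ∈ Ioi a := by simp
  by_cases h : x ∈ Ioi a
  · simp [Set.indicator_apply, h, hmem.mpr h]
  · have h2 : x + c ∉ Ioi (a + c) := fun hh => h (hmem.mp hh)
    simp [Set.indicator_apply, h, h2]

section Laplace
variable (lam : ℝ)

/-- integrand after rescaling -/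
noncomputable def FF (z v : ℝ) : ℝ :=
  Real.exp (z * (Real.log (lam + v/z) - (lam + v/z) - (Real.log lam - lam))) / (lam + v/z)

lemma laplace_int (h1 : 1 < lam) :
    Tendsto (fun z : ℝ => ∫ v in Ioi (0:ℝ), FF lam z v) atTop (𝓝 (1/(lam - 1))) := by
  have hlam0 : (0:ℝ) < lam := by linarith
  set b : ℝ := 1 - 1/lam with hb
  have hb0 : 0 < b := by
    have : 1/lam < 1 := by rw [div_lt_one hlam0]; linarith
    rw [hb]; linarith
  have hval : ∫ v in Ioi (0:ℝ), Real.exp (-(b * v)) / lam = 1/(lam - 1) := by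
    rw [integral_div]
    have h2 : ∫ v in Ioi (0:ℝ), Real.exp (-(b*v)) = b⁻¹ := by
      have h := integral_comp_mul_left_Ioi (fun x => Real.exp (-x)) 0 hb0
      simp only [mul_zero, smul_eq_mul] at h
      rw [h, integral_exp_neg_Ioi_zero, mul_one]
    rw [h2, hb]
    field_simp
  rw [← hval]
  apply MeasureTheory.tendsto_integral_filter_of_dominated_convergence
    (bound := fun v => Real.exp (-(b * v)) / lam)
  · -- measurability
    filter_upwards [eventually_gt_atTop 0] with z hz0
    apply ContinuousOn.aestronglyMeasurable ?_ measurableSet_Ioi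
    have hden : ∀ v ∈ Ioi (0:ℝ), lam + v/z ≠ 0 := by
      intro v hv
      have : 0 < v/z := div_pos hv hz0
      positivity
    have hcden : ContinuousOn (fun v : ℝ => lam + v/z) (Ioi 0) :=
      (continuous_const.add (continuous_id.div_const z)).continuousOn
    unfold FF
    exact ((continuousOn_const.mul (((hcden.log hden).sub hcden).sub
      continuousOn_const)).rexp).div hcden hden
  · -- bound
    filter_upwards [eventually_gt_atTop 0] with z hz0
    refine (ae_restrict_mem measurableSet_Ioi).mono fun v hv => ?_
    have hv0 : (0:ℝ) < v := hv
    have hvz : 0 < v/z := div_pos hv0 hz0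
    have hden : (0:ℝ) < lam + v/z := by linarith
    have hFpos : 0 < FF lam z v := by
      rw [FF]; positivity
    rw [Real.norm_eq_abs, abs_of_pos hFpos, FF]
    have hexp : z * (Real.log (lam + v/z) - (lam + v/z) - (Real.log lam - lam)) ≤ -(b*v) := by
      have hlog : Real.log (lam + v/z) - Real.log lam ≤ v/(lam*z) := by
        have h := Real.log_le_sub_one_of_pos (show 0 < (lam + v/z)/lam by positivity)
        rw [Real.log_div hden.ne' hlam0.ne'] at h
        have heq : (lam + v/z)/lam - 1 = v/(lam*z) := by field_simp; ring
        linarith [h, heq]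
      have h2 : Real.log (lam + v/z) - (lam + v/z) - (Real.log lam - lam)
          ≤ v/(lam*z) - v/z := by linarith
      have h3 := mul_le_mul_of_nonneg_left h2 hz0.le
      have h4 : z * (v/(lam*z) - v/z) = -(b*v) := by
        rw [hb]; field_simp; ring
      linarith [h3, h4]
    gcongr
    linarith
  · -- integrability of bound
    exact ((exp_neg_integrableOn_Ioi 0 hb0).congr_fun
      (fun v _ => by simp [neg_mul]) measurableSet_Ioi).div_const lam
  · -- pointwise limit
    refine (ae_restrict_mem measurableSet_Ioi).mono fun v hv => ?_
    have hv0 : (0:ℝ) < v := hv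
    have key : (fun z : ℝ => FF lam z v)
        =ᶠ[atTop] (fun z : ℝ => Real.exp (z * Real.log (1 + (v/lam)/z) - v) / (lam + v/z)) := by
      filter_upwards [eventually_gt_atTop 0] with z hz0
      have hvz : 0 < v/z := div_pos hv0 hz0
      have hden : (0:ℝ) < lam + v/z := by linarith
      have hlog : Real.log (1 + (v/lam)/z) = Real.log (lam + v/z) - Real.log lam := by
        rw [show (1:ℝ) + (v/lam)/z = (lam + v/z)/lam by
          field_simp [hlam0.ne', hz0.ne'], Real.log_div hden.ne' hlam0.ne']
      have hzz : z * (v / z) = v := by rw [mul_comm]; exact div_mul_cancel₀ v hz0.ne'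
      have hexp_eq : z * (Real.log (lam + v/z) - (lam + v/z) - (Real.log lam - lam))
          = z * Real.log (1 + (v/lam)/z) - v := by
        rw [hlog]; linear_combination -hzz
      rw [FF, hexp_eq]
    have hA : Tendsto (fun z : ℝ => z * Real.log (1 + (v/lam)/z) - v) atTop (𝓝 (-(b*v))) := by
      have h := (Real.tendsto_mul_log_one_add_div_atTop (v/lam)).sub
        (tendsto_const_nhds (x := v))
      have heq : v/lam - v = -(b*v) := by rw [hb]; field_simp; ring
      rwa [heq] at h
    have hB : Tendsto (fun z : ℝ => lam + v/z) atTop (𝓝 lam) := by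
      have h := tendsto_const_nhds (x := lam) |>.add
        ((tendsto_const_nhds (x := v)).div_atTop tendsto_id)
      simpa using h
    have hC : Tendsto (fun z : ℝ => Real.exp (z * Real.log (1 + (v/lam)/z) - v) / (lam + v/z))
        atTop (𝓝 (Real.exp (-(b*v)) / lam)) :=
      ((Real.continuous_exp.tendsto _).comp hA).div hB hlam0.ne'
    exact hC.congr' key.symm

end Laplace

lemma upperGamma_subst (lam z : ℝ) (hlam : 1 < lam) (hz : 0 < z) :
    upperGamma z (lam * z) = z ^ z * ∫ s in Ioi lam, s ^ (z-1) * Real.exp (-(z*s)) := by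
  rw [upperGamma, mul_comm lam z]
  have h := integral_comp_mul_left_Ioi (fun t => t ^ (z-1) * Real.exp (-t)) lam hz
  simp only [smul_eq_mul] at h
  have h2 : (∫ t in Ioi (z * lam), t ^ (z-1) * Real.exp (-t))
      = z * ∫ s in Ioi lam, (z*s) ^ (z-1) * Real.exp (-(z*s)) := by
    rw [h, ← mul_assoc, mul_inv_cancel₀ hz.ne', one_mul]
  rw [h2]
  have h3 : (∫ s in Ioi lam, (z*s) ^ (z-1) * Real.exp (-(z*s)))
      = z ^ (z-1) * ∫ s in Ioi lam, s ^ (z-1) * Real.exp (-(z*s)) := by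
    rw [← integral_const_mul]
    apply setIntegral_congr_fun measurableSet_Ioi
    intro s hs
    have hs0 : (0:ℝ) < s := by have : lam < s := hs; linarith
    dsimp only
    rw [Real.mul_rpow hz.le hs0.le]
    ring
  rw [h3, ← mul_assoc]
  congr 1
  rw [mul_comm, ← Real.rpow_add_one hz.ne' (z-1)]
  norm_num

lemma B_eq (lam z : ℝ) (hlam : 1 < lam) (hz : 0 < z) :
    z * (lam - 1) * Real.exp (z * (lam - Real.log lam))
        * ∫ s in Ioi lam, s ^ (z-1) * Real.exp (-(z*s))
      = (lam - 1) * ∫ v in Ioi (0:ℝ), FF lam z v := by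
  have hlam0 : (0:ℝ) < lam := by linarith
  have h2 : (∫ s in Ioi lam, s ^ (z-1) * Real.exp (-(z*s)))
      = ∫ s in Ioi lam, Real.exp (z * (Real.log s - s)) / s := by
    apply setIntegral_congr_fun measurableSet_Ioi
    intro s hs
    have hs0 : (0:ℝ) < s := by have : lam < s := hs; linarith
    dsimp only
    rw [Real.rpow_def_of_pos hs0, ← Real.exp_add, eq_div_iff hs0.ne']
    nth_rewrite 3 [← Real.exp_log hs0]
    rw [← Real.exp_add]
    congr 1
    ring
  have h3 : (∫ s in Ioi lam, Real.exp (z * (Real.log s - s)) / s)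
      = ∫ u in Ioi (0:ℝ), Real.exp (z * (Real.log (u + lam) - (u + lam))) / (u + lam) := by
    have := integral_Ioi_add (fun s => Real.exp (z * (Real.log s - s)) / s) 0 lam
    rw [zero_add] at this
    exact this
  have h4 : (∫ u in Ioi (0:ℝ), Real.exp (z * (Real.log (u + lam) - (u + lam))) / (u + lam))
      = z⁻¹ * ∫ v in Ioi (0:ℝ),
          Real.exp (z * (Real.log (z⁻¹ * v + lam) - (z⁻¹ * v + lam))) / (z⁻¹ * v + lam) := by
    have h := integral_comp_mul_left_Ioi
      (fun u => Real.exp (z * (Real.log (u + lam) - (u + lam))) / (u + lam)) 0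
      (show (0:ℝ) < z⁻¹ by positivity)
    simp only [mul_zero, smul_eq_mul, inv_inv] at h
    rw [h, ← mul_assoc, inv_mul_cancel₀ hz.ne', one_mul]
  rw [h2, h3, h4]
  have hcol : z * (lam - 1) * Real.exp (z * (lam - Real.log lam))
        * (z⁻¹ * ∫ v in Ioi (0:ℝ),
            Real.exp (z * (Real.log (z⁻¹ * v + lam) - (z⁻¹ * v + lam))) / (z⁻¹ * v + lam))
      = (lam - 1) * ∫ v in Ioi (0:ℝ), Real.exp (z * (lam - Real.log lam)) *
          (Real.exp (z * (Real.log (z⁻¹ * v + lam) - (z⁻¹ * v + lam))) / (z⁻¹ * v + lam)) := by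
    rw [integral_const_mul]
    field_simp
  rw [hcol]
  congr 1
  apply setIntegral_congr_fun measurableSet_Ioi
  intro v hv
  have harg : z⁻¹ * v + lam = lam + v/z := by ring
  dsimp only
  rw [harg, FF, mul_div_assoc', ← Real.exp_add]
  congr 1
  ring

lemma stirling_ratio' : Tendsto (fun z : ℝ =>
    Real.Gamma z * Real.exp z * z / (z ^ z * Real.sqrt (2*π*z))) atTop (𝓝 1) := by
  apply stirling_ratio.congr'
  filter_upwards [eventually_ge_atTop 2] with z hz2
  have hz : (0:ℝ) < z := by linarith
  have hΓ : 0 < Real.Gamma z := Real.Gamma_pos_of_pos hz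
  have hzz : (0:ℝ) < z ^ z := Real.rpow_pos_of_pos hz z
  have hsz : (0:ℝ) < Real.sqrt z := Real.sqrt_pos.mpr hz
  have hs2 : (0:ℝ) < Real.sqrt (2*π) := by positivity
  have hsq : Real.sqrt z * Real.sqrt z = z := Real.mul_self_sqrt hz.le
  have hS : Real.sqrt (2*π*z) = Real.sqrt (2*π) * Real.sqrt z := by
    rw [← Real.sqrt_mul (by positivity)]
  rw [hS, div_eq_div_iff (by positivity) (by positivity)]
  linear_combination (Real.Gamma z * Real.exp z * (z ^ z) * Real.sqrt (2*π)) * hsq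

theorem stmt11 (lam : ℝ) (h1 : 1 < lam) :
    Tendsto (fun z : ℝ =>
        (regGammaQ z (lam * z)) /
          ((1 / (lam - 1)) * (1 / Real.sqrt (2 * π * z)) *
            Real.exp (-z * (lam - 1 - Real.log lam))))
      atTop (nhds 1) := by
  have hlam1 : (0:ℝ) < lam - 1 := by linarith
  have hB : Tendsto (fun z : ℝ => z * (lam - 1) * Real.exp (z * (lam - Real.log lam))
      * ∫ s in Ioi lam, s ^ (z-1) * Real.exp (-(z*s))) atTop (𝓝 1) := by
    have h := (laplace_int lam h1).const_mul (lam - 1)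
    rw [show (lam - 1) * (1/(lam-1)) = 1 by field_simp] at h
    apply h.congr'
    filter_upwards [eventually_gt_atTop 0] with z hz
    exact (B_eq lam z h1 hz).symm
  have hq := hB.div stirling_ratio' one_ne_zero
  rw [div_one] at hq
  apply hq.congr'
  filter_upwards [eventually_ge_atTop 2] with z hz2
  have hz : (0:ℝ) < z := by linarith
  have hΓ : 0 < Real.Gamma z := Real.Gamma_pos_of_pos hz
  have hzz : (0:ℝ) < z ^ z := Real.rpow_pos_of_pos hz z
  have hsqz : (0:ℝ) < Real.sqrt (2*π*z) := by
    have : (0:ℝ) < 2*π*z := by positivity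
    exact Real.sqrt_pos.mpr this
  simp only [Pi.div_apply]
  rw [regGammaQ, upperGamma_subst lam z h1 hz,
    show Real.exp (z * (lam - Real.log lam))
        = Real.exp z / Real.exp (-z * (lam - 1 - Real.log lam)) from by
      rw [eq_div_iff (Real.exp_ne_zero _), ← Real.exp_add]; congr 1; ring]
  field_simp
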